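/- Let f : ℝ → ℝ≥0 be log-concave with M_n(f) := ∫_0^∞ t^n f(t) dt finite for all n. Then the sequence n ↦ M_n(f)/n! is log-concave, i.e., (M_n(f)/n!)² ≥ (M_{n-1}(f)/(n-1)!) · (M_{n+1}(f)/(n+1)!) for all n ≥ 1. -/

import Mathlib

open MeasureTheory Set

lemma gamma_int (k : ℕ) {l : ℝ} (hl : 0 < l) :
    IntegrableOn (fun t : ℝ => t ^ k * Real.exp (-(l * t))) (Ioi 0) := by
  have h := integrableOn_rpow_mul_exp_neg_mul_rpow (s := (k : ℝ)) (p := 1) (b := l)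
    (by exact lt_of_lt_of_le (by norm_num) (Nat.cast_nonneg k)) one_pos hl
  refine h.congr_fun (fun t ht => ?_) measurableSet_Ioi
  beta_reduce
  rw [Real.rpow_one, Real.rpow_natCast, neg_mul]

lemma gamma_val (k : ℕ) {l : ℝ} (hl : 0 < l) :
    ∫ t in Ioi (0:ℝ), t ^ k * Real.exp (-(l * t)) = (Nat.factorial k) / l ^ (k + 1) := by
  have h := Real.integral_rpow_mul_exp_neg_mul_Ioi (a := (k : ℝ) + 1) (by positivity) hl
  rw [show ((k : ℝ) + 1 - 1) = (k : ℝ) by ring] at h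
  have h2 : ∫ t in Ioi (0:ℝ), t ^ k * Real.exp (-(l * t))
      = ∫ t in Ioi (0:ℝ), t ^ (k : ℝ) * Real.exp (-(l * t)) := by
    refine setIntegral_congr_fun measurableSet_Ioi (fun t ht => ?_)
    rw [Real.rpow_natCast]
  rw [h2, h, Real.Gamma_nat_eq_factorial,
    show ((k : ℝ) + 1) = ((k + 1 : ℕ) : ℝ) by push_cast; ring,
    Real.rpow_natCast, div_pow, one_pow]
  ring

lemma key (f : ℝ → ℝ) (hf0 : ∀ x, 0 ≤ f x)
    (hlc : ∀ x y (l : ℝ), 0 ≤ l → l ≤ 1 →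
      f (l * x + (1 - l) * y) ≥ f x ^ l * f y ^ (1 - l))
    (hInt : ∀ n : ℕ, IntegrableOn (fun t => t ^ n * f t) (Ioi 0)) (m : ℕ) :
    (∫ t in Ioi (0:ℝ), t ^ m * f t) / (Nat.factorial m)
        * ((∫ t in Ioi (0:ℝ), t ^ (m + 2) * f t) / (Nat.factorial (m + 2)))
      ≤ ((∫ t in Ioi (0:ℝ), t ^ (m + 1) * f t) / (Nat.factorial (m + 1))) ^ 2 := by
  set M : ℕ → ℝ := fun k => ∫ t in Ioi (0:ℝ), t ^ k * f t with hMdef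
  show M m / (Nat.factorial m) * (M (m + 2) / (Nat.factorial (m + 2)))
      ≤ (M (m + 1) / (Nat.factorial (m + 1))) ^ 2
  have hM_nonneg : ∀ k, 0 ≤ M k := fun k =>
    setIntegral_nonneg measurableSet_Ioi fun t ht =>
      mul_nonneg (pow_nonneg (le_of_lt ht) k) (hf0 t)
  by_cases hz : f =ᵐ[volume.restrict (Ioi 0)] 0
  · have hzk : ∀ k, M k = 0 := by
      intro k
      have : (fun t => t ^ k * f t) =ᵐ[volume.restrict (Ioi 0)] 0 :=
        hz.mono fun t ht => by simp [ht]
      simpa [hMdef] using integral_eq_zero_of_ae this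
    simp [hzk]
  · -- all moments positive
    have hpos : ∀ k, 0 < M k := by
      intro k
      rcases (hM_nonneg k).lt_or_eq with h | h
      · exact h
      · exfalso
        have hnn : 0 ≤ᵐ[volume.restrict (Ioi 0)] fun t => t ^ k * f t :=
          (ae_restrict_mem measurableSet_Ioi).mono fun t ht =>
            mul_nonneg (pow_nonneg (le_of_lt ht) k) (hf0 t)
        have h0 : (fun t => t ^ k * f t) =ᵐ[volume.restrict (Ioi 0)] 0 :=
          (integral_eq_zero_iff_of_nonneg_ae hnn (hInt k)).1 h.symm
        refine hz ?_
        filter_upwards [h0, ae_restrict_mem measurableSet_Ioi] with t h1 h2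
        have : t ^ k ≠ 0 := pow_ne_zero k (ne_of_gt h2)
        simpa [this] using h1
    set l : ℝ := (m + 1) * M m / M (m + 1) with hldef
    have hl : 0 < l := by
      have h1 := hpos m; have h2 := hpos (m + 1)
      rw [hldef]; positivity
    set c : ℝ := M m * l ^ (m + 1) / (Nat.factorial m) with hcdef
    have hfacpos : ∀ k : ℕ, (0:ℝ) < Nat.factorial k := fun k => by
      exact_mod_cast Nat.factorial_pos k
    have hc : 0 < c := by
      have := hpos m; have := hfacpos m
      rw [hcdef]; positivity
    set g : ℝ → ℝ := fun t => c * Real.exp (-(l * t)) with hgdef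
    have hgpos : ∀ t, 0 < g t := fun t => mul_pos hc (Real.exp_pos _)
    have hgInt : ∀ k, IntegrableOn (fun t => t ^ k * g t) (Ioi 0) := by
      intro k
      have h0 : IntegrableOn (fun t : ℝ => c * (t ^ k * Real.exp (-(l * t)))) (Ioi 0) :=
        (gamma_int k hl).const_mul c
      exact h0.congr_fun (fun t _ => by rw [hgdef]; ring) measurableSet_Ioi
    have hMg : ∀ k, ∫ t in Ioi (0:ℝ), t ^ k * g t = c * (Nat.factorial k / l ^ (k + 1)) := by
      intro k
      have h1 : ∫ t in Ioi (0:ℝ), t ^ k * g t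
          = ∫ t in Ioi (0:ℝ), c * (t ^ k * Real.exp (-(l * t))) :=
        setIntegral_congr_fun measurableSet_Ioi fun t _ => by rw [hgdef]; ring
      rw [h1, integral_const_mul, gamma_val k hl]
    have hfacsucc : ∀ k : ℕ, ((Nat.factorial (k + 1) : ℝ)) = (k + 1) * Nat.factorial k := by
      intro k; rw [Nat.factorial_succ]; push_cast; ring
    have key_m : ∫ t in Ioi (0:ℝ), t ^ m * g t = M m := by
      rw [hMg, hcdef]
      field_simp
    have key_m1 : ∫ t in Ioi (0:ℝ), t ^ (m + 1) * g t = M (m + 1) := by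
      rw [hMg, hcdef, hfacsucc]
      have h1 := (hpos m).ne'
      have h2 := (hpos (m + 1)).ne'
      have h3 := (hfacpos m).ne'
      have h4 : ((m:ℝ) + 1) ≠ 0 := by positivity
      have hl' : M (m + 1) = (m + 1) * M m / l := by rw [hldef]; field_simp
      rw [hl', pow_succ]
      field_simp
      ring
    -- the crossing argument: M (m+2) ≤ Mg (m+2)
    have hDint : ∀ k, IntegrableOn (fun t => t ^ k * (f t - g t)) (Ioi 0) := by
      intro k
      have h0 : IntegrableOn (fun t : ℝ => t ^ k * f t - t ^ k * g t) (Ioi 0) :=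
        (hInt k).sub (hgInt k)
      exact h0.congr_fun (fun t _ => by ring) measurableSet_Ioi
    have hI : ∀ k, ∫ t in Ioi (0:ℝ), t ^ k * (f t - g t)
        = M k - ∫ t in Ioi (0:ℝ), t ^ k * g t := by
      intro k
      rw [hMdef]
      rw [← integral_sub (hInt k) (hgInt k)]
      exact setIntegral_congr_fun measurableSet_Ioi fun t _ => by ring
    have hIm : ∫ t in Ioi (0:ℝ), t ^ m * (f t - g t) = 0 := by
      rw [hI, key_m, sub_self]
    have hIm1 : ∫ t in Ioi (0:ℝ), t ^ (m + 1) * (f t - g t) = 0 := by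
      rw [hI, key_m1, sub_self]
    have hcross : M (m + 2) ≤ ∫ t in Ioi (0:ℝ), t ^ (m + 2) * g t := by
      have hgoal : ∫ t in Ioi (0:ℝ), t ^ (m + 2) * (f t - g t) ≤ 0 → _ := id
      suffices h : ∫ t in Ioi (0:ℝ), t ^ (m + 2) * (f t - g t) ≤ 0 by
        rw [hI] at h; linarith
      -- the set S
      set S : Set ℝ := {t | 0 < t ∧ g t ≤ f t} with hSdef
      have hSsub : ∀ t ∈ S, 0 < t := fun t ht => ht.1
      -- convexity of S
      have hSconv : ∀ t1 ∈ S, ∀ t2 ∈ S, ∀ t, t1 ≤ t → t ≤ t2 → t ∈ S := by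
        rintro t1 ⟨ht1, hf1⟩ t2 ⟨ht2, hf2⟩ t h1 h2
        refine ⟨lt_of_lt_of_le ht1 h1, ?_⟩
        rcases eq_or_lt_of_le (h1.trans h2) with heq | hlt
        · have : t = t1 := le_antisymm (heq ▸ h2) h1
          rw [this]; exact hf1
        · set lam : ℝ := (t2 - t) / (t2 - t1) with hlamdef
          have hd : (0:ℝ) < t2 - t1 := by linarith
          have h0lam : 0 ≤ lam := by
            apply div_nonneg <;> linarith
          have hlam1 : lam ≤ 1 := by
            rw [div_le_one hd]; linarith
          have ht_eq : lam * t1 + (1 - lam) * t2 = t := by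
            have hh : lam * (t2 - t1) = t2 - t := by
              rw [hlamdef]; exact div_mul_cancel₀ _ hd.ne'
            field_simp [hlamdef]
            linear_combination -hh
          have hmain := hlc t1 t2 lam h0lam hlam1
          rw [ht_eq] at hmain
          have hgg : g t1 ^ lam * g t2 ^ (1 - lam) = g t := by
            rw [hgdef]
            simp only
            rw [Real.mul_rpow hc.le (Real.exp_pos _).le,
              Real.mul_rpow hc.le (Real.exp_pos _).le,
              ← Real.exp_mul, ← Real.exp_mul,
              mul_mul_mul_comm, ← Real.rpow_add hc, ← Real.exp_add]
            rw [show lam + (1 - lam) = (1:ℝ) by ring, Real.rpow_one]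
            congr 1
            rw [← ht_eq]; ring
          have hle : g t1 ^ lam * g t2 ^ (1 - lam) ≤ f t1 ^ lam * f t2 ^ (1 - lam) := by
            apply mul_le_mul
            · exact Real.rpow_le_rpow (hgpos t1).le hf1 h0lam
            · exact Real.rpow_le_rpow (hgpos t2).le hf2 (by linarith)
            · exact Real.rpow_nonneg (hgpos t2).le _
            · exact Real.rpow_nonneg ((hgpos t1).le.trans hf1) _
          rw [← hgg]
          exact hle.trans hmain
      by_cases hne : S.Nonempty
      · have hbdb : BddBelow S := ⟨0, fun t ht => (hSsub t ht).le⟩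
        set a : ℝ := sInf S with hadef
        have ha0 : 0 ≤ a := le_csInf hne fun t ht => (hSsub t ht).le
        have haS : ∀ t ∈ S, a ≤ t := fun t ht => csInf_le hbdb ht
        have hmem : ∀ t, a < t → (∃ t2 ∈ S, t < t2) → t ∈ S := by
          rintro t hat ⟨t2, ht2S, htt2⟩
          obtain ⟨t1, ht1S, ht1⟩ := exists_lt_of_csInf_lt hne hat
          exact hSconv t1 ht1S t2 ht2S t ht1.le htt2.le
        have hnotS : ∀ t, 0 < t → t ∉ S → f t - g t ≤ 0 := by
          intro t ht htS
          by_contra h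
          exact htS ⟨ht, by linarith⟩
        by_cases hbdd : BddAbove S
        · set b : ℝ := sSup S with hbdef
          have hab : a ≤ b := csInf_le_csSup hne hbdb hbdd
          have hbS : ∀ t ∈ S, t ≤ b := fun t ht => le_csSup hbdd ht
          have hpt : ∀ t ∈ Ioi (0:ℝ),
              (t - a) * (t - b) * (t ^ m * (f t - g t)) ≤ 0 := by
            intro t ht
            rw [mem_Ioi] at ht
            by_cases htS : t ∈ S
            · have h1 : 0 ≤ t - a := by linarith [haS t htS]
              have h2 : t - b ≤ 0 := by linarith [hbS t htS]
              have h3 : 0 ≤ t ^ m * (f t - g t) :=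
                mul_nonneg (pow_nonneg ht.le m) (by linarith [htS.2])
              have h4 : (t - a) * (t - b) ≤ 0 := mul_nonpos_iff.mpr (Or.inl ⟨h1, h2⟩)
              exact mul_nonpos_iff.mpr (Or.inr ⟨h4, h3⟩)
            · have hD : f t - g t ≤ 0 := hnotS t ht htS
              have hq : 0 ≤ (t - a) * (t - b) := by
                rcases le_or_gt t a with h | h
                · exact mul_nonneg_iff.mpr (Or.inr ⟨by linarith, by linarith⟩)
                · rcases le_or_gt b t with h' | h'
                  · apply mul_nonneg <;> linarith
                  · exact absurd (hmem t h (exists_lt_of_lt_csSup hne h')) htS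
              have h3 : t ^ m * (f t - g t) ≤ 0 :=
                mul_nonpos_iff.mpr (Or.inl ⟨pow_nonneg ht.le m, hD⟩)
              exact mul_nonpos_iff.mpr (Or.inl ⟨hq, h3⟩)
          have hJ : ∫ t in Ioi (0:ℝ), (t - a) * (t - b) * (t ^ m * (f t - g t)) ≤ 0 :=
            setIntegral_nonpos measurableSet_Ioi hpt
          have hJeq : ∫ t in Ioi (0:ℝ), (t - a) * (t - b) * (t ^ m * (f t - g t))
              = (∫ t in Ioi (0:ℝ), t ^ (m + 2) * (f t - g t))
                - (a + b) * (∫ t in Ioi (0:ℝ), t ^ (m + 1) * (f t - g t))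
                + a * b * (∫ t in Ioi (0:ℝ), t ^ m * (f t - g t)) := by
            have hint2 : Integrable (fun t : ℝ => t ^ (m + 2) * (f t - g t)
                - (a + b) * (t ^ (m + 1) * (f t - g t))) (volume.restrict (Ioi 0)) :=
              (hDint (m + 2)).sub ((hDint (m + 1)).const_mul (a + b))
            have hint3 : Integrable (fun t : ℝ => a * b * (t ^ m * (f t - g t)))
                (volume.restrict (Ioi 0)) := (hDint m).const_mul (a * b)
            have hint4 : Integrable (fun t : ℝ => t ^ (m + 2) * (f t - g t))
                (volume.restrict (Ioi 0)) := hDint (m + 2)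
            have hint5 : Integrable (fun t : ℝ => (a + b) * (t ^ (m + 1) * (f t - g t)))
                (volume.restrict (Ioi 0)) := (hDint (m + 1)).const_mul (a + b)
            rw [show (fun t : ℝ => (t - a) * (t - b) * (t ^ m * (f t - g t)))
                = fun t : ℝ => (t ^ (m + 2) * (f t - g t)
                    - (a + b) * (t ^ (m + 1) * (f t - g t)))
                  + a * b * (t ^ m * (f t - g t)) from funext fun t => by ring]
            rw [integral_add hint2 hint3, integral_sub hint4 hint5,
              integral_const_mul, integral_const_mul]
          rw [hJeq, hIm, hIm1] at hJ
          linarith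
        · -- unbounded above: f = g a.e.
          have hpt2 : ∀ t ∈ Ioi (0:ℝ), 0 ≤ (t - a) * (t ^ m * (f t - g t)) := by
            intro t ht
            rw [mem_Ioi] at ht
            rcases lt_trichotomy t a with h | h | h
            · have htS : t ∉ S := fun hS => absurd (haS t hS) (by linarith)
              have hD : f t - g t ≤ 0 := hnotS t ht htS
              exact mul_nonneg_iff.mpr (Or.inr ⟨by linarith,
                mul_nonpos_iff.mpr (Or.inl ⟨pow_nonneg ht.le m, hD⟩)⟩)
            · rw [h]; simp
            · obtain ⟨t2, ht2S, htt2⟩ := (not_bddAbove_iff.mp hbdd) t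
              have htS : t ∈ S := hmem t h ⟨t2, ht2S, htt2⟩
              exact mul_nonneg (by linarith)
                (mul_nonneg (pow_nonneg ht.le m) (by linarith [htS.2]))
          have hKint : IntegrableOn (fun t : ℝ => (t - a) * (t ^ m * (f t - g t))) (Ioi 0) := by
            have h0 : IntegrableOn (fun t : ℝ => t ^ (m + 1) * (f t - g t)
                - a * (t ^ m * (f t - g t))) (Ioi 0) :=
              (hDint (m + 1)).sub ((hDint m).const_mul a)
            exact h0.congr_fun (fun t _ => by ring) measurableSet_Ioi
          have hK : ∫ t in Ioi (0:ℝ), (t - a) * (t ^ m * (f t - g t)) = 0 := by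
            have hint4 : Integrable (fun t : ℝ => t ^ (m + 1) * (f t - g t))
                (volume.restrict (Ioi 0)) := hDint (m + 1)
            have hint5 : Integrable (fun t : ℝ => a * (t ^ m * (f t - g t)))
                (volume.restrict (Ioi 0)) := (hDint m).const_mul a
            rw [show (fun t : ℝ => (t - a) * (t ^ m * (f t - g t)))
                = fun t : ℝ => t ^ (m + 1) * (f t - g t) - a * (t ^ m * (f t - g t))
                from funext fun t => by ring]
            rw [integral_sub hint4 hint5, integral_const_mul, hIm, hIm1]
            ring
          have hae0 : (fun t : ℝ => (t - a) * (t ^ m * (f t - g t)))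
              =ᵐ[volume.restrict (Ioi 0)] 0 := by
            have hnn : 0 ≤ᵐ[volume.restrict (Ioi 0)]
                fun t : ℝ => (t - a) * (t ^ m * (f t - g t)) :=
              (ae_restrict_mem measurableSet_Ioi).mono fun t ht => hpt2 t ht
            exact (integral_eq_zero_iff_of_nonneg_ae hnn hKint).1 hK
          have hane : ∀ᵐ t ∂(volume.restrict (Ioi 0)), t ≠ a := by
            apply ae_restrict_of_ae
            rw [ae_iff]
            have : {t : ℝ | ¬t ≠ a} = {a} := by ext t; simp
            rw [this]
            exact measure_singleton a
          have hzero2 : (fun t : ℝ => t ^ (m + 2) * (f t - g t))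
              =ᵐ[volume.restrict (Ioi 0)] 0 := by
            filter_upwards [hae0, hane] with t h1 h2
            have h3 : t - a ≠ 0 := sub_ne_zero.mpr h2
            have h4 : t ^ m * (f t - g t) = 0 := by
              rcases mul_eq_zero.mp h1 with h | h
              · exact absurd h h3
              · exact h
            show t ^ (m + 2) * (f t - g t) = 0
            calc t ^ (m + 2) * (f t - g t) = t ^ 2 * (t ^ m * (f t - g t)) := by ring
            _ = 0 := by rw [h4]; ring
          rw [integral_eq_zero_of_ae hzero2]
      · -- S empty
        apply setIntegral_nonpos measurableSet_Ioi
        intro t ht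
        rw [mem_Ioi] at ht
        have : t ∉ S := fun hS => hne ⟨t, hS⟩
        have hD : f t - g t ≤ 0 := by
          by_contra h
          exact this ⟨ht, by linarith⟩
        exact mul_nonpos_iff.mpr (Or.inl ⟨pow_nonneg ht.le (m + 2), hD⟩)
    -- final computation
    have hg2 : ∫ t in Ioi (0:ℝ), t ^ (m + 2) * g t
        = c * (Nat.factorial (m + 2) / l ^ (m + 3)) := hMg (m + 2)
    have eMm : M m = c * (Nat.factorial m / l ^ (m + 1)) := by rw [← key_m, hMg]
    have eMm1 : M (m + 1) = c * (Nat.factorial (m + 1) / l ^ (m + 2)) := by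
      rw [← key_m1, hMg]
    calc M m / (Nat.factorial m) * (M (m + 2) / (Nat.factorial (m + 2)))
        ≤ M m / (Nat.factorial m)
          * ((c * (Nat.factorial (m + 2) / l ^ (m + 3))) / (Nat.factorial (m + 2))) := by
          rw [← hg2]
          have h1 : 0 ≤ M m / (Nat.factorial m) := div_nonneg (hM_nonneg m) (hfacpos m).le
          apply mul_le_mul_of_nonneg_left _ h1
          apply div_le_div_of_nonneg_right hcross (hfacpos (m + 2)).le
      _ = (M (m + 1) / (Nat.factorial (m + 1))) ^ 2 := by
          rw [eMm, eMm1]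
          have h1 := (hfacpos m).ne'
          have h2 := (hfacpos (m + 1)).ne'
          have h3 := (hfacpos (m + 2)).ne'
          have h4 := hl.ne'
          field_simp
          ring

theorem stmt5 (f : ℝ → ℝ) (hf0 : ∀ x, 0 ≤ f x)
    (hlc : ∀ x y (l : ℝ), 0 ≤ l → l ≤ 1 →
      f (l * x + (1 - l) * y) ≥ f x ^ l * f y ^ (1 - l))
    (hInt : ∀ n : ℕ, IntegrableOn (fun t => t ^ n * f t) (Ioi 0))
    (M : ℕ → ℝ) (hM : ∀ n, M n = ∫ t in Ioi 0, t ^ n * f t) :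
    ∀ n : ℕ, 1 ≤ n →
      (M (n - 1) / (Nat.factorial (n - 1)) : ℝ) * (M (n + 1) / (Nat.factorial (n + 1)))
        ≤ (M n / (Nat.factorial n)) ^ 2 := by
  intro n hn
  obtain ⟨m, rfl⟩ : ∃ m, n = m + 1 := ⟨n - 1, (Nat.succ_pred_eq_of_pos hn).symm⟩
  have h1 : m + 1 - 1 = m := rfl
  have h2 : m + 1 + 1 = m + 2 := rfl
  rw [h1, h2, hM, hM, hM]
  exact key f hf0 hlc hInt m
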